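/- Let σ : ℕ → ℝ≥0 be nonincreasing with ∑σ(α) = 1, and suppose for integers 0 = s_0 < s_1 < ... it holds that ∑_{α > s_n} σ(α) ≤ f(n) with f strictly decreasing, f(0) = 1. Define μ(α) = δ(n)/(s_{n+1} − s_n) for s_n < α ≤ s_{n+1}, where δ(n) = f(n) − f(n+1) (assume ∑δ(n) = 1). Then μ is majorized by σ, i.e., for every m, ∑_{α=1}^m μ(α) ≤ ∑_{α=1}^m σ(α). -/

import Mathlib

/-- **The flattened distribution is majorized by the spectrum.** Let `σ` (indexed
from `α = 1`) be a nonincreasing probability distribution with tails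
`∑_{α > s_n} σ(α) ≤ f(n)` for a strictly decreasing `f` with `f 0 = 1`, where
`0 = s₀ < s₁ < ...`. The flattened distribution `μ`, constant equal to
`δ(n)/(s_{n+1} − s_n)` on each block `s_n < α ≤ s_{n+1}` (with
`δ(n) = f(n) − f(n+1)` summing to 1), is majorized by `σ`: every partial sum of
`μ` is at most the corresponding partial sum of `σ`. -/
theorem stmt_18 (σ : ℕ → ℝ) (hσ_nonneg : ∀ α, 0 ≤ σ α)
    (hσ_mono : ∀ α β : ℕ, 1 ≤ α → α ≤ β → σ β ≤ σ α)
    (hσ_summable : Summable σ) (hσ_sum : ∑' α : ℕ, σ (α + 1) = 1)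
    (s : ℕ → ℕ) (hs0 : s 0 = 0) (hs_mono : StrictMono s)
    (f : ℕ → ℝ) (hf_anti : StrictAnti f) (hf0 : f 0 = 1)
    (htail : ∀ n, ∑' j : ℕ, σ (j + s n + 1) ≤ f n)
    (hδ_sum : ∑' n : ℕ, (f n - f (n + 1)) = 1)
    (μ : ℕ → ℝ)
    (hμ : ∀ n α, s n < α → α ≤ s (n + 1) →
      μ α = (f n - f (n + 1)) / ((s (n + 1) : ℝ) - (s n : ℝ))) :
    ∀ m : ℕ, ∑ α ∈ Finset.Icc 1 m, μ α ≤ ∑ α ∈ Finset.Icc 1 m, σ α := by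
  have hIcc : ∀ q : ℕ, Finset.Icc 1 q = Finset.Ioc 0 q := by
    intro q; ext x; simp [Nat.lt_iff_add_one_le]
  -- the tail function
  set T : ℕ → ℝ := fun p => ∑' j : ℕ, σ (j + p + 1) with hTdef
  have hsum' : ∀ p : ℕ, Summable fun j => σ (j + p + 1) := by
    intro p
    have := (summable_nat_add_iff (f := σ) (p + 1)).mpr hσ_summable
    simpa [add_assoc] using this
  -- splitting the tail
  have hsplit : ∀ p q : ℕ, p ≤ q →
      T p = (∑ α ∈ Finset.Ioc p q, σ α) + T q := by
    intro p q hpq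
    have h2 := ((hsum' p).sum_add_tsum_nat_add (q - p)).symm
    have h3 : (∑' i : ℕ, σ (i + (q - p) + p + 1)) = ∑' j : ℕ, σ (j + q + 1) := by
      apply tsum_congr
      intro i
      congr 1
      omega
    have h4 : (∑ i ∈ Finset.range (q - p), σ (i + p + 1)) = ∑ α ∈ Finset.Ioc p q, σ α := by
      rw [← Finset.Icc_add_one_left_eq_Ioc, ← Finset.Ico_add_one_right_eq_Icc,
        Finset.sum_Ico_eq_sum_range]
      apply Finset.sum_congr (by congr 1 <;> omega)
      intro i _
      congr 1
      omega
    show (∑' j : ℕ, σ (j + p + 1)) = (∑ α ∈ Finset.Ioc p q, σ α) + ∑' j : ℕ, σ (j + q + 1)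
    rw [h2, h3, h4]
  -- partial sums of σ
  have hSσ : ∀ m : ℕ, ∑ α ∈ Finset.Icc 1 m, σ α = 1 - T m := by
    intro m
    have h0 : T 0 = 1 := by
      rw [← hσ_sum]
    have hh := hsplit 0 m (Nat.zero_le m)
    rw [h0] at hh
    rw [hIcc]
    linarith
  -- partial sums of μ at block endpoints
  have hLpos : ∀ n : ℕ, (0 : ℝ) < (s (n + 1) : ℝ) - (s n : ℝ) := by
    intro n
    have h := hs_mono (Nat.lt_succ_self n)
    have : (s n : ℝ) < s (n + 1) := by exact_mod_cast h
    linarith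
  have hblock : ∀ n q : ℕ, s n ≤ q → q ≤ s (n + 1) →
      (∑ α ∈ Finset.Ioc (s n) q, μ α)
        = ((q : ℝ) - (s n : ℝ)) * ((f n - f (n + 1)) / ((s (n + 1) : ℝ) - (s n : ℝ))) := by
    intro n q h1 h2
    have hc : ∑ α ∈ Finset.Ioc (s n) q, μ α
        = ∑ _α ∈ Finset.Ioc (s n) q, ((f n - f (n + 1)) / ((s (n + 1) : ℝ) - (s n : ℝ))) := by
      apply Finset.sum_congr rfl
      intro α hα
      rw [Finset.mem_Ioc] at hα
      exact hμ n α hα.1 (le_trans hα.2 h2)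
    rw [hc, Finset.sum_const, Nat.card_Ioc, nsmul_eq_mul]
    congr 1
    rw [Nat.cast_sub h1]
  have hSμ : ∀ n : ℕ, ∑ α ∈ Finset.Icc 1 (s n), μ α = 1 - f n := by
    intro n
    induction n with
    | zero => simp [hs0, hf0]
    | succ n ih =>
      have hle : s n ≤ s (n + 1) := (hs_mono (Nat.lt_succ_self n)).le
      rw [hIcc] at ih ⊢
      rw [← Finset.sum_Ioc_consecutive _ (Nat.zero_le (s n)) hle, ih,
        hblock n (s (n + 1)) hle le_rfl]
      have hL := hLpos n
      field_simp
      ring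
  -- main proof
  intro m
  rcases Nat.eq_zero_or_pos m with rfl | hm
  · simp
  -- find the block containing m
  have hex : ∃ n, m ≤ s n := ⟨m, hs_mono.le_apply⟩
  obtain ⟨n, hm1, hm2⟩ : ∃ n, s n < m ∧ m ≤ s (n + 1) := by
    have h1 := Nat.find_spec hex
    have h0 : Nat.find hex ≠ 0 := by
      intro h; rw [h, hs0] at h1; omega
    refine ⟨Nat.find hex - 1, ?_, ?_⟩
    · have h2 := Nat.find_min hex (show Nat.find hex - 1 < Nat.find hex by omega)
      omega
    · have h3 : Nat.find hex - 1 + 1 = Nat.find hex := by omega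
      rw [h3]; exact h1
  -- partial sum of μ up to m
  have hSμm : ∑ α ∈ Finset.Icc 1 m, μ α
      = (1 - f n) + ((m : ℝ) - (s n : ℝ)) * ((f n - f (n + 1)) / ((s (n + 1) : ℝ) - (s n : ℝ))) := by
    rw [hIcc, ← Finset.sum_Ioc_consecutive _ (Nat.zero_le (s n)) hm1.le,
      ← hIcc, hSμ n, hblock n m hm1.le hm2]
  rw [hSμm, hSσ m]
  -- the key inequality
  set A := ∑ α ∈ Finset.Ioc (s n) m, σ α with hA
  set B := ∑ α ∈ Finset.Ioc (s n) (s (n + 1)), σ α with hB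
  have hTA : T (s n) = A + T m := hsplit (s n) m hm1.le
  have hTB : T (s n) = B + T (s (n + 1)) :=
    hsplit (s n) (s (n + 1)) (hs_mono (Nat.lt_succ_self n)).le
  have ht1 : T (s n) ≤ f n := htail n
  have ht2 : T (s (n + 1)) ≤ f (n + 1) := htail (n + 1)
  set kr : ℝ := (m : ℝ) - (s n : ℝ) with hkr
  set Lr : ℝ := (s (n + 1) : ℝ) - (s n : ℝ) with hLr
  have hk0 : (0 : ℝ) < kr := by
    have : (s n : ℝ) < m := by exact_mod_cast hm1
    rw [hkr]; linarith
  have hkL : kr ≤ Lr := by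
    have : (m : ℝ) ≤ s (n + 1) := by exact_mod_cast hm2
    rw [hkr, hLr]; linarith
  have hL : (0 : ℝ) < Lr := hLpos n
  -- L * A ≥ k * B
  have hABC : kr * B ≤ Lr * A := by
    have hBsplit : B = A + ∑ α ∈ Finset.Ioc m (s (n + 1)), σ α := by
      rw [hB, hA, Finset.sum_Ioc_consecutive _ hm1.le hm2]
    set C := ∑ α ∈ Finset.Ioc m (s (n + 1)), σ α with hC
    have hAlow : (Finset.Ioc (s n) m).card • σ m ≤ A := by
      apply Finset.card_nsmul_le_sum
      intro α hα
      rw [Finset.mem_Ioc] at hα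
      exact hσ_mono α m (by omega) hα.2
    have hChigh : C ≤ (Finset.Ioc m (s (n + 1))).card • σ m := by
      apply Finset.sum_le_card_nsmul
      intro α hα
      rw [Finset.mem_Ioc] at hα
      exact hσ_mono m α (by omega) hα.1.le
    rw [Nat.card_Ioc, nsmul_eq_mul, Nat.cast_sub hm1.le] at hAlow
    rw [Nat.card_Ioc, nsmul_eq_mul, Nat.cast_sub hm2] at hChigh
    have hσm : 0 ≤ σ m := hσ_nonneg m
    have h1 : kr * σ m ≤ A := by rw [hkr]; exact hAlow
    have h2 : C ≤ (Lr - kr) * σ m := by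
      have he : ((s (n + 1) : ℝ) - (m : ℝ)) = Lr - kr := by rw [hLr, hkr]; ring
      rw [← he]; exact hChigh
    nlinarith [hBsplit]
  -- conclude
  have hfin : kr * ((f n - f (n + 1)) / Lr) ≤ f n - T m := by
    rw [mul_div_assoc', div_le_iff₀ hL]
    nlinarith
  linarith
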